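/- arXiv:2405.13766 — 2 statements merged into one kernel-verified Lean document; each statement's English description precedes it below -/
import Mathlib

section
/- Let f₁, ..., fₙ: ℝ^d → ℝ ∪ {+∞} be proper, closed and convex, and suppose there exists x⋆ minimizing every fᵢ simultaneously (interpolation regime). Then for any 0 < γ < ∞, the function f = (1/n)∑ᵢ fᵢ and M^γ = (1/n)∑ᵢ M_{fᵢ}^γ have the same set of minimizers and the same minimum value. -/
/-- The Moreau envelope of an extended-real-valued function `f` with parameter `γ`. -/
noncomputable def moreauE {d : ℕ} (γ : ℝ) (f : EuclideanSpace ℝ (Fin d) → EReal)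
    (x : EuclideanSpace ℝ (Fin d)) : EReal :=
  ⨅ z, (f z + (((1 / (2 * γ)) * ‖z - x‖ ^ 2 : ℝ) : EReal))

lemma coeSumAux {ι : Type*} (s : Finset ι) (g : ι → ℝ) :
    ((∑ i ∈ s, g i : ℝ) : EReal) = ∑ i ∈ s, (g i : EReal) :=
  map_sum (⟨⟨Real.toEReal, EReal.coe_zero⟩, EReal.coe_add⟩ : ℝ →+ EReal) g s

lemma mulLeftAux {r : ℝ} (hr : 0 < r) (a b : EReal) :
    (r : EReal) * a ≤ (r : EReal) * b ↔ a ≤ b := by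
  have h0 : (0:EReal) < ((r⁻¹ : ℝ) : EReal) := by exact_mod_cast inv_pos.2 hr
  have hne : ((r⁻¹:ℝ) : EReal) ≠ ⊤ := by simp
  have := StrictMono.le_iff_le (EReal.strictMono_div_right_of_pos h0 hne) (a := a) (b := b)
  simp only [EReal.div_eq_inv_mul] at this
  rw [← EReal.coe_inv, inv_inv] at this
  exact this

lemma moreau_le_self {d : ℕ} {γ : ℝ} (f : EuclideanSpace ℝ (Fin d) → EReal)
    (x : EuclideanSpace ℝ (Fin d)) : moreauE γ f x ≤ f x := by
  refine iInf_le_of_le x ?_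
  simp

lemma le_moreau {d : ℕ} {γ : ℝ} (hγ : 0 < γ) {f : EuclideanSpace ℝ (Fin d) → EReal} {m : ℝ}
    (hm : ∀ z, (m : EReal) ≤ f z) (x : EuclideanSpace ℝ (Fin d)) :
    (m : EReal) ≤ moreauE γ f x := by
  refine le_iInf fun z => ?_
  have hpen0 : (0:ℝ) ≤ (1 / (2 * γ)) * ‖z - x‖ ^ 2 := by positivity
  have hpen : (0:EReal) ≤ (((1 / (2 * γ)) * ‖z - x‖ ^ 2 : ℝ) : EReal) :=
    EReal.coe_nonneg.2 hpen0
  calc (m : EReal) ≤ f z := hm z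
    _ ≤ f z + _ := le_add_of_nonneg_right hpen

lemma moreau_min {d : ℕ} {γ : ℝ} (hγ : 0 < γ) {f : EuclideanSpace ℝ (Fin d) → EReal}
    (hlsc : LowerSemicontinuous f) {m : ℝ} (hm : ∀ z, (m : EReal) ≤ f z)
    {x : EuclideanSpace ℝ (Fin d)} (hx : moreauE γ f x ≤ (m : EReal)) :
    f x = (m : EReal) := by
  refine le_antisymm ?_ (hm x)
  by_contra h
  push_neg at h
  obtain ⟨y, hy1, hy2⟩ := EReal.exists_between_coe_real h
  have hev := hlsc x (y : EReal) hy2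
  rw [Metric.eventually_nhds_iff] at hev
  obtain ⟨ε, hε, hball⟩ := hev
  set c : ℝ := min y (m + 1 / (2 * γ) * ε ^ 2) with hc
  have hcm : m < c := lt_min (EReal.coe_lt_coe_iff.1 hy1) (lt_add_of_pos_right _ (by positivity))
  have hle : (c : EReal) ≤ moreauE γ f x := by
    refine le_iInf fun z => ?_
    rcases lt_or_ge (dist z x) ε with hd | hd
    · have h1 : (c : EReal) ≤ (y : EReal) := EReal.coe_le_coe_iff.2 (min_le_left _ _)
      have hpen0 : (0:ℝ) ≤ (1 / (2 * γ)) * ‖z - x‖ ^ 2 := by positivity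
      have hpen : (0:EReal) ≤ (((1 / (2 * γ)) * ‖z - x‖ ^ 2 : ℝ) : EReal) :=
        EReal.coe_nonneg.2 hpen0
      exact h1.trans ((hball hd).le.trans (le_add_of_nonneg_right hpen))
    · have hnorm : ε ≤ ‖z - x‖ := by rwa [dist_eq_norm] at hd
      have hpen : (1 / (2 * γ)) * ε ^ 2 ≤ (1 / (2 * γ)) * ‖z - x‖ ^ 2 := by
        have h2 : ε ^ 2 ≤ ‖z - x‖ ^ 2 := by nlinarith
        have : (0:ℝ) ≤ 1 / (2 * γ) := by positivity
        nlinarith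
      calc (c : EReal) ≤ ((m + 1 / (2 * γ) * ε ^ 2 : ℝ) : EReal) :=
            EReal.coe_le_coe_iff.2 (min_le_right _ _)
        _ = (m : EReal) + ((1 / (2 * γ) * ε ^ 2 : ℝ) : EReal) := EReal.coe_add _ _
        _ ≤ f z + (((1 / (2 * γ)) * ‖z - x‖ ^ 2 : ℝ) : EReal) :=
            add_le_add (hm z) (EReal.coe_le_coe_iff.2 hpen)
  have : (c : EReal) ≤ (m : EReal) := hle.trans hx
  exact absurd (EReal.coe_le_coe_iff.1 this) (not_le.2 hcm)

lemma sum_termwise_aux {n : ℕ} (g : Fin n → EReal) (m : Fin n → ℝ)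
    (hge : ∀ i, (m i : EReal) ≤ g i) (hsum : ∑ i, g i ≤ ∑ i, ((m i : EReal))) :
    ∀ i, g i = (m i : EReal) := by
  by_contra h
  push_neg at h
  obtain ⟨j, hj⟩ := h
  have hjlt : (m j : EReal) < g j := lt_of_le_of_ne (hge j) (Ne.symm hj)
  set S : ℝ := ∑ i ∈ Finset.univ.erase j, m i with hS
  have hSer : ∑ i ∈ Finset.univ.erase j, ((m i : EReal)) = (S : EReal) :=
    (coeSumAux _ _).symm
  have h1 : ∑ i, ((m i : EReal)) = (m j : EReal) + (S : EReal) := by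
    rw [← hSer]
    exact (Finset.add_sum_erase _ (fun i => ((m i : ℝ) : EReal)) (Finset.mem_univ j)).symm
  have h2 : (m j : EReal) + (S : EReal) < g j + (S : EReal) :=
    EReal.add_lt_add_right_coe hjlt S
  have h3 : g j + (S : EReal) ≤ ∑ i, g i := by
    rw [← hSer, ← Finset.add_sum_erase _ g (Finset.mem_univ j)]
    exact add_le_add_right (Finset.sum_le_sum fun i _ => hge i) _
  exact absurd hsum (not_le.2 (h1 ▸ lt_of_lt_of_le h2 h3))

/-- For proper, closed, convex `f₁, ..., fₙ : ℝ^d → ℝ ∪ {+∞}` in the interpolation regime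
(there is a common minimizer `x⋆` of all `fᵢ`), for any `0 < γ < ∞` the functions
`f = (1/n)∑ᵢ fᵢ` and `M^γ = (1/n)∑ᵢ M_{fᵢ}^γ` have the same set of minimizers and the same
minimum value. -/
theorem stmt7 {d n : ℕ} (hn : 0 < n) (f : Fin n → EuclideanSpace ℝ (Fin d) → EReal)
    (hproper : ∀ i, ∃ x, f i x ≠ ⊤) (hbot : ∀ i x, f i x ≠ ⊥)
    (hconv : ∀ i, ∀ x y : EuclideanSpace ℝ (Fin d), ∀ a b : ℝ, 0 ≤ a → 0 ≤ b → a + b = 1 →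
      f i (a • x + b • y) ≤ (a : EReal) * f i x + (b : EReal) * f i y)
    (hlsc : ∀ i, LowerSemicontinuous (f i))
    (hint : ∃ xs : EuclideanSpace ℝ (Fin d), ∀ i, ∀ y, f i xs ≤ f i y)
    (γ : ℝ) (hγ : 0 < γ) :
    {x | ∀ y, ((1 / (n : ℝ) : ℝ) : EReal) * ∑ i, f i x ≤
              ((1 / (n : ℝ) : ℝ) : EReal) * ∑ i, f i y} =
      {x | ∀ y, ((1 / (n : ℝ) : ℝ) : EReal) * ∑ i, moreauE γ (f i) x ≤
                ((1 / (n : ℝ) : ℝ) : EReal) * ∑ i, moreauE γ (f i) y} ∧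
    (⨅ x, ((1 / (n : ℝ) : ℝ) : EReal) * ∑ i, f i x) =
      ⨅ x, ((1 / (n : ℝ) : ℝ) : EReal) * ∑ i, moreauE γ (f i) x := by
  obtain ⟨xs, hxs⟩ := hint
  have hr : (0:ℝ) < 1 / (n : ℝ) := by positivity
  -- minimum values are finite reals
  have hfin : ∀ i, ∃ r : ℝ, f i xs = (r : EReal) := by
    intro i
    obtain ⟨x0, hx0⟩ := hproper i
    have hnt : f i xs ≠ ⊤ := fun h => hx0 (top_le_iff.1 (h ▸ hxs i x0))
    exact ⟨(f i xs).toReal, (EReal.coe_toReal hnt (hbot i xs)).symm⟩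
  choose m hm using hfin
  have hmle : ∀ i z, (m i : EReal) ≤ f i z := fun i z => (hm i) ▸ hxs i z
  have hMle : ∀ i z, (m i : EReal) ≤ moreauE γ (f i) z := fun i z => le_moreau hγ (hmle i) z
  have hMxs : ∀ i, moreauE γ (f i) xs = (m i : EReal) := fun i =>
    le_antisymm ((moreau_le_self (f i) xs).trans (hm i).le) (hMle i xs)
  have hsum_f_xs : ∑ i, f i xs = ∑ i, ((m i : EReal)) :=
    Finset.sum_congr rfl fun i _ => hm i
  have hsum_M_xs : ∑ i, moreauE γ (f i) xs = ∑ i, ((m i : EReal)) :=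
    Finset.sum_congr rfl fun i _ => hMxs i
  have hsum_f_ge : ∀ x, ∑ i, ((m i : EReal)) ≤ ∑ i, f i x := fun x =>
    Finset.sum_le_sum fun i _ => hmle i x
  have hsum_M_ge : ∀ x, ∑ i, ((m i : EReal)) ≤ ∑ i, moreauE γ (f i) x := fun x =>
    Finset.sum_le_sum fun i _ => hMle i x
  constructor
  · ext x
    simp only [Set.mem_setOf_eq]
    constructor
    · intro h y
      have hx : ∑ i, f i x ≤ ∑ i, ((m i : EReal)) := by
        rw [← hsum_f_xs]; exact (mulLeftAux hr _ _).1 (h xs)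
      have heq : ∀ i, f i x = (m i : EReal) := sum_termwise_aux _ _ (fun i => hmle i x) hx
      have hMx : ∀ i, moreauE γ (f i) x = (m i : EReal) := fun i =>
        le_antisymm ((moreau_le_self (f i) x).trans (heq i).le) (hMle i x)
      refine (mulLeftAux hr _ _).2 ?_
      calc ∑ i, moreauE γ (f i) x = ∑ i, ((m i : EReal)) :=
            Finset.sum_congr rfl fun i _ => hMx i
        _ ≤ ∑ i, moreauE γ (f i) y := hsum_M_ge y
    · intro h y
      have hx : ∑ i, moreauE γ (f i) x ≤ ∑ i, ((m i : EReal)) := by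
        rw [← hsum_M_xs]; exact (mulLeftAux hr _ _).1 (h xs)
      have heqM : ∀ i, moreauE γ (f i) x = (m i : EReal) :=
        sum_termwise_aux _ _ (fun i => hMle i x) hx
      have heq : ∀ i, f i x = (m i : EReal) := fun i =>
        moreau_min hγ (hlsc i) (hmle i) (heqM i).le
      refine (mulLeftAux hr _ _).2 ?_
      calc ∑ i, f i x = ∑ i, ((m i : EReal)) := Finset.sum_congr rfl fun i _ => heq i
        _ ≤ ∑ i, f i y := hsum_f_ge y
  · have h1 : (⨅ x, ((1 / (n : ℝ) : ℝ) : EReal) * ∑ i, f i x) =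
        ((1 / (n : ℝ) : ℝ) : EReal) * ∑ i, ((m i : EReal)) := by
      refine le_antisymm (iInf_le_of_le xs (by rw [hsum_f_xs])) ?_
      exact le_iInf fun x => (mulLeftAux hr _ _).2 (hsum_f_ge x)
    have h2 : (⨅ x, ((1 / (n : ℝ) : ℝ) : EReal) * ∑ i, moreauE γ (f i) x) =
        ((1 / (n : ℝ) : ℝ) : EReal) * ∑ i, ((m i : EReal)) := by
      refine le_antisymm (iInf_le_of_le xs (by rw [hsum_M_xs])) ?_
      exact le_iInf fun x => (mulLeftAux hr _ _).2 (hsum_M_ge x)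
    rw [h1, h2]
end

section
/- Let f: ℝ^d → ℝ be differentiable, convex and L-smooth, γ > 0, and x ∈ ℝ^d. Then ‖x − prox_{γf}(x)‖² ≥ (γ/(1 + γL/2)) (f(x) − f(prox_{γf}(x))). Equivalently, ‖x − prox_{γf}(x)‖² ≥ (2γ/(2+γL))(f(x) − f(prox_{γf}(x))). -/
open InnerProductSpace

/-- Let `f : ℝ^d → ℝ` be differentiable, convex and `L`-smooth, `γ > 0`, and `x ∈ ℝ^d`.
Then for `p = prox_{γf}(x)` (the minimizer of `z ↦ f(z) + (1/(2γ))‖z − x‖²`):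
`‖x − p‖² ≥ (γ/(1 + γL/2)) (f(x) − f(p))`, equivalently
`‖x − p‖² ≥ (2γ/(2+γL)) (f(x) − f(p))`. -/
theorem stmt14 {d : ℕ} (L γ : ℝ) (hL : 0 < L) (hγ : 0 < γ)
    (f : EuclideanSpace ℝ (Fin d) → ℝ)
    (g : EuclideanSpace ℝ (Fin d) → EuclideanSpace ℝ (Fin d))
    (hconv : ConvexOn ℝ Set.univ f)
    (hgrad : ∀ x, HasGradientAt f (g x) x)
    (hlip : ∀ x y, ‖g x - g y‖ ≤ L * ‖x - y‖) :
    ∀ (x p : EuclideanSpace ℝ (Fin d)),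
      (∀ z, f p + (1 / (2 * γ)) * ‖p - x‖ ^ 2 ≤ f z + (1 / (2 * γ)) * ‖z - x‖ ^ 2) →
      ‖x - p‖ ^ 2 ≥ (γ / (1 + γ * L / 2)) * (f x - f p) ∧
      ‖x - p‖ ^ 2 ≥ (2 * γ / (2 + γ * L)) * (f x - f p) := by
  intro x p hmin
  set w : EuclideanSpace ℝ (Fin d) := x - p with hw
  -- the line through p in direction w
  have hline : ∀ t : ℝ, HasDerivAt (fun t : ℝ => p + t • w) w t := by
    intro t
    simpa using ((hasDerivAt_id t).smul_const w).const_add p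
  -- derivative of f along the line
  have hφ : ∀ t : ℝ, HasDerivAt (fun t : ℝ => f (p + t • w))
      (inner ℝ (g (p + t • w)) w : ℝ) t := by
    intro t
    have h := (hgrad (p + t • w)).hasFDerivAt.comp_hasDerivAt t (hline t)
    exact h.congr_deriv (by simp [toDual_apply_apply])
  -- derivative of the squared-norm term along the line
  have hn : ∀ t : ℝ, HasDerivAt (fun t : ℝ => ‖(p + t • w) - x‖ ^ 2)
      (2 * (inner ℝ ((p + t • w) - x) w : ℝ)) t := by
    intro t
    have hc : HasDerivAt (fun t : ℝ => (p + t • w) - x) w t := (hline t).sub_const x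
    have h := hc.inner ℝ hc
    have heq : (fun t : ℝ => (inner ℝ ((p + t • w) - x) ((p + t • w) - x) : ℝ))
        = fun t : ℝ => ‖(p + t • w) - x‖ ^ 2 := by
      funext t; exact real_inner_self_eq_norm_sq _
    rw [heq] at h
    exact h.congr_deriv (by rw [real_inner_comm w ((p + t • w) - x)]; ring)
  -- stationarity: the prox objective along the line has a local min at 0
  have hq : ∀ t : ℝ, HasDerivAt
      (fun t : ℝ => f (p + t • w) + (1 / (2 * γ)) * ‖(p + t • w) - x‖ ^ 2)
      ((inner ℝ (g (p + t • w)) w : ℝ) + (1 / (2 * γ)) * (2 * (inner ℝ ((p + t • w) - x) w : ℝ)))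
      t := fun t => (hφ t).add ((hn t).const_mul _)
  have hloc : IsLocalMin
      (fun t : ℝ => f (p + t • w) + (1 / (2 * γ)) * ‖(p + t • w) - x‖ ^ 2) 0 := by
    refine Filter.Eventually.of_forall fun t => ?_
    simpa using hmin (p + t • w)
  have hzero := hloc.hasDerivAt_eq_zero (hq 0)
  simp only [zero_smul, add_zero] at hzero
  have hpxw : (inner ℝ (p - x) w : ℝ) = -‖w‖ ^ 2 := by
    have : p - x = -w := by rw [hw]; abel
    rw [this, inner_neg_left, real_inner_self_eq_norm_sq]
  have hkey : (inner ℝ (g p) w : ℝ) = (1 / γ) * ‖w‖ ^ 2 := by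
    rw [hpxw] at hzero
    field_simp at hzero ⊢
    linarith
  -- descent lemma along the line: f x ≤ f p + ⟪g p, w⟫ + (L/2)‖w‖²
  have hψ : ∀ t : ℝ, HasDerivAt
      (fun t : ℝ => f (p + t • w) - t * (inner ℝ (g p) w : ℝ) - L / 2 * ‖w‖ ^ 2 * t ^ 2)
      ((inner ℝ (g (p + t • w)) w : ℝ) - (inner ℝ (g p) w : ℝ) - L / 2 * ‖w‖ ^ 2 * (2 * t)) t := by
    intro t
    have h1 : HasDerivAt (fun t : ℝ => t * (inner ℝ (g p) w : ℝ)) (inner ℝ (g p) w : ℝ) t := by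
      simpa using (hasDerivAt_id t).mul_const (inner ℝ (g p) w : ℝ)
    have h2 : HasDerivAt (fun t : ℝ => L / 2 * ‖w‖ ^ 2 * t ^ 2)
        (L / 2 * ‖w‖ ^ 2 * (2 * t)) t := by
      simpa using (hasDerivAt_pow 2 t).const_mul (L / 2 * ‖w‖ ^ 2)
    exact ((hφ t).sub h1).sub h2
  have hderiv_nonpos : ∀ t ∈ interior (Set.Icc (0 : ℝ) 1),
      deriv (fun t : ℝ => f (p + t • w) - t * (inner ℝ (g p) w : ℝ)
        - L / 2 * ‖w‖ ^ 2 * t ^ 2) t ≤ 0 := by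
    intro t ht
    rw [interior_Icc] at ht
    rw [(hψ t).deriv]
    have hCS : (inner ℝ (g (p + t • w)) w : ℝ) - (inner ℝ (g p) w : ℝ)
        ≤ ‖g (p + t • w) - g p‖ * ‖w‖ := by
      rw [← inner_sub_left]
      exact real_inner_le_norm _ _
    have hL1 : ‖g (p + t • w) - g p‖ ≤ L * (t * ‖w‖) := by
      have := hlip (p + t • w) p
      have he : (p + t • w) - p = t • w := by abel
      rw [he, norm_smul, Real.norm_eq_abs, abs_of_pos ht.1] at this
      exact this
    have hw0 : (0 : ℝ) ≤ ‖w‖ := norm_nonneg _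
    nlinarith [mul_le_mul_of_nonneg_right hL1 hw0]
  have hcont : ContinuousOn (fun t : ℝ => f (p + t • w) - t * (inner ℝ (g p) w : ℝ)
      - L / 2 * ‖w‖ ^ 2 * t ^ 2) (Set.Icc (0 : ℝ) 1) :=
    fun t _ => ((hψ t).differentiableAt).continuousAt.continuousWithinAt
  have hanti := antitoneOn_of_deriv_nonpos (convex_Icc (0 : ℝ) 1) hcont
      (fun t ht => ((hψ t).differentiableAt).differentiableWithinAt) hderiv_nonpos
  have h01 := hanti (Set.left_mem_Icc.2 zero_le_one) (Set.right_mem_Icc.2 zero_le_one)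
      zero_le_one
  have hpw : p + (1 : ℝ) • w = x := by rw [hw]; simp
  have hdescent : f x ≤ f p + (inner ℝ (g p) w : ℝ) + L / 2 * ‖w‖ ^ 2 := by
    have h := h01
    simp only [one_smul, zero_smul, add_zero, one_pow, one_mul, mul_one, mul_zero,
      zero_mul, sub_zero, ne_eq, OfNat.ofNat_ne_zero, not_false_eq_true, zero_pow] at h
    rw [show p + w = x from by simpa using hpw] at h
    linarith
  -- combine
  have hfinal : f x - f p ≤ (1 / γ + L / 2) * ‖w‖ ^ 2 := by
    rw [hkey] at hdescent; linarith
  have hnorm : ‖x - p‖ ^ 2 = ‖w‖ ^ 2 := by rw [hw]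
  have hw2 : (0 : ℝ) ≤ ‖w‖ ^ 2 := sq_nonneg _
  have hmain : γ * (f x - f p) ≤ ‖w‖ ^ 2 + γ * L / 2 * ‖w‖ ^ 2 := by
    have h := mul_le_mul_of_nonneg_left hfinal (le_of_lt hγ)
    have h2 : γ * ((1 / γ + L / 2) * ‖w‖ ^ 2) = ‖w‖ ^ 2 + γ * L / 2 * ‖w‖ ^ 2 := by
      field_simp
    linarith [h2 ▸ h]
  constructor
  · rw [hnorm, ge_iff_le, div_mul_eq_mul_div, div_le_iff₀ (by positivity)]
    nlinarith [hmain]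
  · rw [hnorm, ge_iff_le, div_mul_eq_mul_div, div_le_iff₀ (by positivity)]
    nlinarith [hmain]
end
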